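/- Let f ∈ ℂ, let ζ be a nonzero complex number in the closed unit disk, z in the open unit disk with ζ ≠ z and z·conj(ζ) ≠ 1, and n ≥ 1 an integer. Then the kernel K_n(ζ, z) := [(f/ζ)·(ζ+z)/(ζ−z) + (conj(f)/conj(ζ))·(1+z·conj(ζ))/(1−z·conj(ζ))]·(ζ − z + conj(ζ − z))^{n−1} is purely imaginary whenever |z| = 1, since (ζ − z + conj(ζ − z))^{n−1} is real. -/

import Mathlib

open Complex

theorem iterated_schwarz_kernel_imaginary (f ζ z : ℂ) (n : ℕ) (hn : 1 ≤ n)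
    (hζ0 : ζ ≠ 0) (hζ : ‖ζ‖ ≤ 1) (hζz : ζ ≠ z)
    (h1 : z * (starRingEnd ℂ) ζ ≠ 1) :
    ‖z‖ = 1 →
      ((ζ - z) + (starRingEnd ℂ) (ζ - z)).im = 0 ∧
      (((f / ζ) * (ζ + z) / (ζ - z)
          + ((starRingEnd ℂ) f / (starRingEnd ℂ) ζ) * (1 + z * (starRingEnd ℂ) ζ)
              / (1 - z * (starRingEnd ℂ) ζ))
        * ((ζ - z) + (starRingEnd ℂ) (ζ - z)) ^ (n - 1)).re = 0 := by
  intro hz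
  have him : ((ζ - z) + (starRingEnd ℂ) (ζ - z)).im = 0 := by
    simp [Complex.add_im, Complex.conj_im]
  refine ⟨him, ?_⟩
  have hz0 : z ≠ 0 := by
    intro h; rw [h] at hz; simp at hz
  have hzz : z * (starRingEnd ℂ) z = 1 := by
    rw [Complex.mul_conj]
    norm_cast
    rw [Complex.normSq_eq_norm_sq, hz]; norm_num
  have hζsub : ζ - z ≠ 0 := sub_ne_zero.mpr hζz
  have hζc : (starRingEnd ℂ) ζ ≠ 0 := by simpa using hζ0
  have h1' : 1 - z * (starRingEnd ℂ) ζ ≠ 0 := by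
    intro h; apply h1; linear_combination -h
  have hcsub : (starRingEnd ℂ) ζ - (starRingEnd ℂ) z ≠ 0 := by
    intro h
    apply hζsub
    have h2 := congrArg (starRingEnd ℂ) h
    simpa using h2
  have h1c : 1 - (starRingEnd ℂ) z * ζ ≠ 0 := by
    intro h
    apply hζsub
    linear_combination -z * h - ζ * hzz
  have key : ((starRingEnd ℂ) ζ + (starRingEnd ℂ) z) / ((starRingEnd ℂ) ζ - (starRingEnd ℂ) z)
      = (-(1 + z * (starRingEnd ℂ) ζ)) / (1 - z * (starRingEnd ℂ) ζ) := by
    rw [div_eq_div_iff hcsub h1']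
    linear_combination (-2 * (starRingEnd ℂ) ζ) * hzz
  have key2 : (1 + (starRingEnd ℂ) z * ζ) / (1 - (starRingEnd ℂ) z * ζ)
      = (-(ζ + z)) / (ζ - z) := by
    rw [div_eq_div_iff h1c hζsub]
    linear_combination (-2 * ζ) * hzz
  set S : ℂ := (f / ζ) * (ζ + z) / (ζ - z)
      + ((starRingEnd ℂ) f / (starRingEnd ℂ) ζ) * (1 + z * (starRingEnd ℂ) ζ)
          / (1 - z * (starRingEnd ℂ) ζ) with hS
  have hconj : (starRingEnd ℂ) S = -S := by
    rw [hS]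
    simp only [map_add, map_div₀, map_mul, map_sub, map_one, Complex.conj_conj]
    rw [mul_div_assoc, key, mul_div_assoc, key2]
    ring
  have hre : S.re = 0 := by
    have h := congrArg Complex.re hconj
    simp only [Complex.conj_re, Complex.neg_re] at h
    linarith
  set r : ℂ := (ζ - z) + (starRingEnd ℂ) (ζ - z) with hrdef
  have hr : r = ((r.re : ℝ) : ℂ) := by
    apply Complex.ext <;> simp [him]
  rw [hr, ← Complex.ofReal_pow, Complex.mul_re, hre]
  simp [← Complex.ofReal_pow]
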